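/- arXiv:2501.09516 — 2 statements merged into one kernel-verified Lean document; each statement's English description precedes it below -/
import Mathlib

section
/- Let X ∈ St(n,r), let f : ℝ^{n×r} → ℝ be differentiable at X, let h : ℝ^{n×r} → ℝ be convex, and let B : ℝ^{n×r} → ℝ^{n×r} be a linear map that is self-adjoint for the trace inner product, maps T_X into itself, and is positive definite on T_X. If V* minimizes φ(V) := ⟨∇f(X),V⟩ + (1/2)⟨V,BV⟩ + h(X+V) over the subspace T_X, then for every α ∈ [0,1] one has φ(αV*) − φ(0) ≤ (α(α−2)/2)⟨V*, B V*⟩. -/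
open Matrix

/-- The trace inner product `⟨A, B⟩ = tr(AᵀB)` on `ℝ^{n×r}`. -/
noncomputable def tinner {n r : ℕ} (A B : Matrix (Fin n) (Fin r) ℝ) : ℝ := (Aᵀ * B).trace

/-- `V` belongs to the tangent space `T_X = {V : VᵀX + XᵀV = 0}` of the Stiefel manifold at `X`. -/
def IsTangent {n r : ℕ} (X V : Matrix (Fin n) (Fin r) ℝ) : Prop := Vᵀ * X + Xᵀ * V = 0

attribute [local instance] Matrix.frobeniusNormedAddCommGroup Matrix.frobeniusNormedSpace

lemma tinner_smul_left {n r : ℕ} (s : ℝ) (A B : Matrix (Fin n) (Fin r) ℝ) :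
    tinner (s • A) B = s * tinner A B := by
  simp [tinner, Matrix.transpose_smul, Matrix.smul_mul, Matrix.trace_smul, smul_eq_mul]

lemma tinner_smul_right {n r : ℕ} (s : ℝ) (A B : Matrix (Fin n) (Fin r) ℝ) :
    tinner A (s • B) = s * tinner A B := by
  simp [tinner, Matrix.mul_smul, Matrix.trace_smul, smul_eq_mul]

lemma isTangent_smul {n r : ℕ} {X V : Matrix (Fin n) (Fin r) ℝ} (s : ℝ)
    (hV : IsTangent X V) : IsTangent X (s • V) := by
  unfold IsTangent at *
  rw [Matrix.transpose_smul, Matrix.smul_mul, Matrix.mul_smul, ← smul_add, hV, smul_zero]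

theorem stmt1 {n r : ℕ} (X : Matrix (Fin n) (Fin r) ℝ) (hX : Xᵀ * X = 1)
    (f h : Matrix (Fin n) (Fin r) ℝ → ℝ)
    -- `f` is differentiable at `X` with (Euclidean) gradient `G = ∇f(X)`
    (G : Matrix (Fin n) (Fin r) ℝ) (Lf : Matrix (Fin n) (Fin r) ℝ →L[ℝ] ℝ)
    (hf : HasFDerivAt f Lf X) (hGrad : ∀ V, Lf V = tinner G V)
    -- `h` is convex
    (hconv : ConvexOn ℝ Set.univ h)
    -- `B` is linear, self-adjoint for the trace inner product, maps `T_X` into itself,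
    -- and is positive definite on `T_X`
    (B : Matrix (Fin n) (Fin r) ℝ →ₗ[ℝ] Matrix (Fin n) (Fin r) ℝ)
    (hBsa : ∀ U V, tinner U (B V) = tinner (B U) V)
    (hBtan : ∀ V, IsTangent X V → IsTangent X (B V))
    (hBpos : ∀ V, IsTangent X V → V ≠ 0 → 0 < tinner V (B V))
    -- the objective `φ(V) = ⟨∇f(X),V⟩ + (1/2)⟨V,BV⟩ + h(X+V)`
    (φ : Matrix (Fin n) (Fin r) ℝ → ℝ)
    (hφ : ∀ V, φ V = tinner G V + (1 / 2) * tinner V (B V) + h (X + V))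
    -- `V*` minimizes `φ` over `T_X`
    (Vs : Matrix (Fin n) (Fin r) ℝ) (hVs : IsTangent X Vs)
    (hmin : ∀ V, IsTangent X V → φ Vs ≤ φ V) :
    ∀ α : ℝ, α ∈ Set.Icc (0 : ℝ) 1 →
      φ (α • Vs) - φ 0 ≤ α * (α - 2) / 2 * tinner Vs (B Vs) := by
  set Q : ℝ := tinner Vs (B Vs) with hQ
  set tG : ℝ := tinner G Vs with htG
  -- value of φ at α • Vs
  have hval : ∀ α : ℝ, φ (α • Vs) =
      α * tG + α ^ 2 / 2 * Q + h (X + α • Vs) := by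
    intro α
    simp only [hφ, tinner_smul_left, LinearMap.map_smul, tinner_smul_right, htG, hQ]
    ring
  have hval0 : φ 0 = h X := by
    have := hval 0
    simpa using this
  -- convexity bound
  have hcvx : ∀ α ∈ Set.Icc (0:ℝ) 1, h (X + α • Vs) ≤ α * h (X + Vs) + (1 - α) * h X := by
    intro α hα
    have := hconv.2 (Set.mem_univ (X + Vs)) (Set.mem_univ X) hα.1 (by linarith [hα.2])
      (by ring : α + (1 - α) = 1)
    have heq : α • (X + Vs) + (1 - α) • X = X + α • Vs := by
      rw [smul_add]
      module
    rw [heq] at this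
    simpa [smul_eq_mul] using this
  -- the key intermediate inequality
  have hkey : ∀ α ∈ Set.Icc (0:ℝ) 1,
      φ (α • Vs) - φ 0 ≤ α * (φ Vs - φ 0) + (α ^ 2 - α) / 2 * Q := by
    intro α hα
    have h1 := hcvx α hα
    have h2 : φ Vs = tG + (1/2) * Q + h (X + Vs) := by rw [hφ]
    rw [hval α, hval0, h2]
    nlinarith [h1]
  -- φ Vs - φ 0 ≤ -Q/2
  have hmin0 : φ Vs ≤ φ 0 := hmin 0 (by simp [IsTangent])
  have hstep : ∀ t ∈ Set.Ico (0:ℝ) 1, φ Vs - φ 0 ≤ -(t/2) * Q := by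
    intro t ht
    have h1 : φ Vs ≤ φ (t • Vs) := hmin _ (isTangent_smul t hVs)
    have h2 := hkey t ⟨ht.1, le_of_lt ht.2⟩
    -- (1 - t)(φ Vs - φ 0) ≤ (t² - t)/2 Q
    have h3 : (1 - t) * (φ Vs - φ 0) ≤ (t ^ 2 - t) / 2 * Q := by nlinarith
    have h4 : (0:ℝ) < 1 - t := by linarith [ht.2]
    have h5 : (t ^ 2 - t) / 2 * Q = (1 - t) * (-(t/2) * Q) := by ring
    rw [h5] at h3
    exact le_of_mul_le_mul_left h3 h4 |>.trans_eq rfl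
  have hhalf : φ Vs - φ 0 ≤ -(1/2) * Q := by
    have hten : Filter.Tendsto (fun t : ℝ => -(t/2) * Q) (nhdsWithin 1 (Set.Iio 1))
        (nhds (-(1/2) * Q)) := by
      apply Filter.Tendsto.mono_left _ nhdsWithin_le_nhds
      exact (Continuous.tendsto (by continuity) 1)
    refine ge_of_tendsto hten ?_
    filter_upwards [Ico_mem_nhdsLT_of_mem (by norm_num : (1:ℝ) ∈ Set.Ioc (0:ℝ) 1)] with t ht
    exact hstep t ht
  intro α hα
  have h1 := hkey α hα
  have h2 : α * (φ Vs - φ 0) ≤ α * (-(1/2) * Q) :=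
    mul_le_mul_of_nonneg_left hhalf hα.1
  calc φ (α • Vs) - φ 0 ≤ α * (φ Vs - φ 0) + (α ^ 2 - α) / 2 * Q := h1
    _ ≤ α * (-(1/2) * Q) + (α ^ 2 - α) / 2 * Q := by linarith
    _ = α * (α - 2) / 2 * Q := by ring
end

section
/- Let f : ℝ^{n×r} → ℝ be continuously differentiable with L-Lipschitz gradient and h : ℝ^{n×r} → ℝ convex and L_h-Lipschitz; set F := f + h. Let 0 < κ₁ ≤ κ₂, σ ∈ (0,1), c₀ > 0, M₁ > 0, and let m be a nonnegative integer. Suppose sequences X_k ∈ St(n,r), V_k ∈ T_{X_k}, α_k ∈ [c₀,1], and linear maps B_k : ℝ^{n×r} → ℝ^{n×r}, self-adjoint for the trace inner product and mapping T_{X_k} into itself, satisfy for all k: (i) κ₁‖V‖² ≤ ⟨V, B_k V⟩ ≤ κ₂‖V‖² for all V ∈ T_{X_k}; (ii) V_k minimizes φ_k(V) := ⟨∇f(X_k),V⟩ + (1/2)⟨V, B_k V⟩ + h(X_k+V) over T_{X_k}; (iii) ‖X_{k+1} − X_k‖ ≤ M₁ α_k ‖V_k‖; (iv) F(X_{k+1})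 ≤ max_{max(k−m,0) ≤ j ≤ k} F(X_j) − (σ/2) α_k ⟨V_k, B_k V_k⟩. Then V_k → 0 and the sequence F(X_k) converges. -/
open Matrix Filter

-- The norm `‖·‖` (and the topology) below come from the Frobenius norm,
-- associated to the trace inner product.
attribute [local instance] Matrix.frobeniusNormedAddCommGroup Matrix.frobeniusNormedSpace

lemma tinner_eq_sum {n r : ℕ} (A B : Matrix (Fin n) (Fin r) ℝ) :
    tinner A B = ∑ i : Fin n, ∑ j : Fin r, A i j * B i j := by
  simp only [tinner, Matrix.trace, Matrix.diag_apply, Matrix.mul_apply, Matrix.transpose_apply]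
  exact Finset.sum_comm

lemma fro_norm_sq {n r : ℕ} (A : Matrix (Fin n) (Fin r) ℝ) :
    ‖A‖ ^ 2 = ∑ i : Fin n, ∑ j : Fin r, A i j ^ 2 := by
  have h0 : ∀ (i : Fin n) (j : Fin r), ‖A i j‖ ^ (2 : ℝ) = A i j ^ 2 := by
    intro i j
    rw [show (2 : ℝ) = ((2 : ℕ) : ℝ) by norm_num, Real.rpow_natCast, Real.norm_eq_abs, sq_abs]
  rw [Matrix.frobenius_norm_def]
  simp_rw [h0]
  rw [← Real.sqrt_eq_rpow, Real.sq_sqrt (by positivity)]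

lemma tinner_self {n r : ℕ} (A : Matrix (Fin n) (Fin r) ℝ) : tinner A A = ‖A‖ ^ 2 := by
  rw [tinner_eq_sum, fro_norm_sq]
  simp_rw [pow_two]

lemma abs_tinner_le {n r : ℕ} (A B : Matrix (Fin n) (Fin r) ℝ) :
    |tinner A B| ≤ ‖A‖ * ‖B‖ := by
  have h2 := Finset.sum_mul_sq_le_sq_mul_sq Finset.univ
    (fun p : Fin n × Fin r => A p.1 p.2) (fun p : Fin n × Fin r => B p.1 p.2)
  have e1 : tinner A B = ∑ p : Fin n × Fin r, A p.1 p.2 * B p.1 p.2 := by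
    rw [tinner_eq_sum]; simp [Fintype.sum_prod_type]
  have e2 : ‖A‖ ^ 2 = ∑ p : Fin n × Fin r, A p.1 p.2 ^ 2 := by
    rw [fro_norm_sq]; simp [Fintype.sum_prod_type]
  have e3 : ‖B‖ ^ 2 = ∑ p : Fin n × Fin r, B p.1 p.2 ^ 2 := by
    rw [fro_norm_sq]; simp [Fintype.sum_prod_type]
  rw [← e1, ← e2, ← e3] at h2
  nlinarith [abs_nonneg (tinner A B), sq_abs (tinner A B), norm_nonneg A, norm_nonneg B,
    mul_nonneg (norm_nonneg A) (norm_nonneg B)]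

theorem stmt9 {n r : ℕ} (f h : Matrix (Fin n) (Fin r) ℝ → ℝ)
    -- `f` is continuously differentiable with gradient function `g = ∇f`, which is `L`-Lipschitz
    (g : Matrix (Fin n) (Fin r) ℝ → Matrix (Fin n) (Fin r) ℝ)
    (Lf : Matrix (Fin n) (Fin r) ℝ → (Matrix (Fin n) (Fin r) ℝ →L[ℝ] ℝ))
    (hf : ∀ Z, HasFDerivAt f (Lf Z) Z) (hGrad : ∀ Z V, Lf Z V = tinner (g Z) V)
    (L Lh κ₁ κ₂ σ c₀ M₁ : ℝ) (m : ℕ)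
    (hLipg : ∀ A B, ‖g A - g B‖ ≤ L * ‖A - B‖)
    -- `h` is convex and `L_h`-Lipschitz
    (hconv : ConvexOn ℝ Set.univ h)
    (hLiph : ∀ A B, |h A - h B| ≤ Lh * ‖A - B‖)
    (hκ₁ : 0 < κ₁) (hκ₁₂ : κ₁ ≤ κ₂) (hσ : σ ∈ Set.Ioo (0 : ℝ) 1)
    (hc₀ : 0 < c₀) (hM₁ : 0 < M₁)
    -- the sequences
    (X V : ℕ → Matrix (Fin n) (Fin r) ℝ) (α : ℕ → ℝ)
    (B : ℕ → (Matrix (Fin n) (Fin r) ℝ →ₗ[ℝ] Matrix (Fin n) (Fin r) ℝ))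
    (hXSt : ∀ k, (X k)ᵀ * X k = 1)
    (hVt : ∀ k, IsTangent (X k) (V k))
    (hα : ∀ k, α k ∈ Set.Icc c₀ 1)
    -- each `B_k` is self-adjoint and maps `T_{X_k}` into itself
    (hBsa : ∀ k U W, tinner U (B k W) = tinner (B k U) W)
    (hBtan : ∀ k W, IsTangent (X k) W → IsTangent (X k) (B k W))
    -- (i) uniform bounds on the quadratic form of `B_k` over `T_{X_k}`
    (hBbound : ∀ k W, IsTangent (X k) W →
      κ₁ * ‖W‖ ^ 2 ≤ tinner W (B k W) ∧ tinner W (B k W) ≤ κ₂ * ‖W‖ ^ 2)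
    -- (ii) `V_k` minimizes `φ_k` over `T_{X_k}`
    (hmin : ∀ k W, IsTangent (X k) W →
      tinner (g (X k)) (V k) + (1 / 2) * tinner (V k) (B k (V k)) + h (X k + V k) ≤
        tinner (g (X k)) W + (1 / 2) * tinner W (B k W) + h (X k + W))
    -- (iii)
    (hstep : ∀ k, ‖X (k + 1) - X k‖ ≤ M₁ * α k * ‖V k‖)
    -- (iv) nonmonotone sufficient decrease
    (hdec : ∀ k, f (X (k + 1)) + h (X (k + 1)) ≤
      (Finset.Icc (k - m) k).sup' (Finset.nonempty_Icc.mpr (Nat.sub_le k m))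
          (fun j => f (X j) + h (X j))
        - σ / 2 * α k * tinner (V k) (B k (V k))) :
    Tendsto V atTop (nhds 0) ∧
      ∃ l : ℝ, Tendsto (fun k => f (X k) + h (X k)) atTop (nhds l) := by
  obtain ⟨hσ0, hσ1⟩ := hσ
  set Fx : ℕ → ℝ := fun k => f (X k) + h (X k) with hFxdef
  set d : ℕ → ℝ := fun k => σ / 2 * α k * tinner (V k) (B k (V k)) with hddef
  set M : ℕ → ℝ := fun k =>
    (Finset.Icc (k - m) k).sup' (Finset.nonempty_Icc.mpr (Nat.sub_le k m)) (fun j => Fx j)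
    with hMdef
  have hdec' : ∀ k, Fx (k + 1) ≤ M k - d k := fun k => hdec k
  -- norm of Stiefel points
  set Rr : ℝ := Real.sqrt r with hRrdef
  have hRr0 : 0 ≤ Rr := Real.sqrt_nonneg _
  have hXnorm : ∀ k, ‖X k‖ = Rr := by
    intro k
    have h1 : ‖X k‖ ^ 2 = (r : ℝ) := by
      rw [← tinner_self, tinner, hXSt k]
      simp
    rw [hRrdef, ← h1, Real.sqrt_sq (norm_nonneg _)]
  -- Lipschitz constant for F := f + h on the ball of radius Rr
  set K : ℝ := (‖g 0‖ + |L| * Rr) + |Lh| with hKdef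
  have hK0 : 0 ≤ K := by positivity
  have hgb : ∀ Z : Matrix (Fin n) (Fin r) ℝ, ‖Z‖ ≤ Rr → ‖g Z‖ ≤ ‖g 0‖ + |L| * Rr := by
    intro Z hZ
    have h1 := hLipg Z 0
    have h2 : ‖Z - 0‖ = ‖Z‖ := by simp
    rw [h2] at h1
    have h3 : L * ‖Z‖ ≤ |L| * Rr := by
      calc L * ‖Z‖ ≤ |L| * ‖Z‖ := mul_le_mul_of_nonneg_right (le_abs_self L) (norm_nonneg _)
        _ ≤ |L| * Rr := mul_le_mul_of_nonneg_left hZ (abs_nonneg _)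
    linarith [norm_sub_norm_le (g Z) (g 0)]
  have hfLip : ∀ A B' : Matrix (Fin n) (Fin r) ℝ, ‖A‖ ≤ Rr → ‖B'‖ ≤ Rr →
      |f A - f B'| ≤ (‖g 0‖ + |L| * Rr) * ‖A - B'‖ := by
    intro A B' hA hB'
    have hs : Convex ℝ (Metric.closedBall (0 : Matrix (Fin n) (Fin r) ℝ) Rr) :=
      convex_closedBall _ _
    have hder : ∀ x ∈ Metric.closedBall (0 : Matrix (Fin n) (Fin r) ℝ) Rr,
        HasFDerivWithinAt f (Lf x) (Metric.closedBall 0 Rr) x :=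
      fun x _ => (hf x).hasFDerivWithinAt
    have hbound : ∀ x ∈ Metric.closedBall (0 : Matrix (Fin n) (Fin r) ℝ) Rr,
        @Norm.norm _ (ContinuousLinearMap.hasOpNorm (E := Matrix (Fin n) (Fin r) ℝ)) (Lf x) ≤
          ‖g 0‖ + |L| * Rr := by
      intro x hx
      rw [Metric.mem_closedBall, dist_zero_right] at hx
      refine ContinuousLinearMap.opNorm_le_bound _ (by positivity) (fun W => ?_)
      erw [hGrad, Real.norm_eq_abs]
      calc |tinner (g x) W| ≤ ‖g x‖ * ‖W‖ := abs_tinner_le _ _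
        _ ≤ (‖g 0‖ + |L| * Rr) * ‖W‖ :=
          mul_le_mul_of_nonneg_right (hgb x hx) (norm_nonneg _)
    have hmemA : A ∈ Metric.closedBall (0 : Matrix (Fin n) (Fin r) ℝ) Rr := by
      rw [Metric.mem_closedBall, dist_zero_right]; exact hA
    have hmemB : B' ∈ Metric.closedBall (0 : Matrix (Fin n) (Fin r) ℝ) Rr := by
      rw [Metric.mem_closedBall, dist_zero_right]; exact hB'
    have := hs.norm_image_sub_le_of_norm_hasFDerivWithin_le hder hbound hmemB hmemA
    rwa [Real.norm_eq_abs] at this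
  have hFLip : ∀ A B' : Matrix (Fin n) (Fin r) ℝ, ‖A‖ ≤ Rr → ‖B'‖ ≤ Rr →
      |(f A + h A) - (f B' + h B')| ≤ K * ‖A - B'‖ := by
    intro A B' hA hB'
    have h1 := hfLip A B' hA hB'
    have h2 : |h A - h B'| ≤ |Lh| * ‖A - B'‖ :=
      (hLiph A B').trans (mul_le_mul_of_nonneg_right (le_abs_self _) (norm_nonneg _))
    have h3 : (f A + h A) - (f B' + h B') = (f A - f B') + (h A - h B') := by ring
    rw [h3]
    have h4 : K * ‖A - B'‖ = (‖g 0‖ + |L| * Rr) * ‖A - B'‖ + |Lh| * ‖A - B'‖ := by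
      rw [hKdef]; ring
    calc |(f A - f B') + (h A - h B')| ≤ |f A - f B'| + |h A - h B'| := abs_add_le _ _
      _ ≤ K * ‖A - B'‖ := by rw [h4]; linarith
  have hFX : ∀ j k : ℕ, |Fx j - Fx k| ≤ K * ‖X j - X k‖ :=
    fun j k => hFLip (X j) (X k) (le_of_eq (hXnorm j)) (le_of_eq (hXnorm k))
  have hFstep : ∀ k, |Fx (k + 1) - Fx k| ≤ K * (M₁ * ‖V k‖) := by
    intro k
    have h1 := hFX (k + 1) k
    have h2 := hstep k
    have h3 : M₁ * α k * ‖V k‖ ≤ M₁ * ‖V k‖ := by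
      nlinarith [mul_nonneg (mul_nonneg hM₁.le (norm_nonneg (V k))) (sub_nonneg.mpr (hα k).2)]
    calc |Fx (k + 1) - Fx k| ≤ K * ‖X (k + 1) - X k‖ := h1
      _ ≤ K * (M₁ * ‖V k‖) := mul_le_mul_of_nonneg_left (h2.trans h3) hK0
  -- lower bounds on d
  have hd : ∀ k, σ / 2 * c₀ * κ₁ * ‖V k‖ ^ 2 ≤ d k := by
    intro k
    have h1 := (hBbound k (V k) (hVt k)).1
    have h2 := (hα k).1
    have hq0 : 0 ≤ tinner (V k) (B k (V k)) :=
      le_trans (by positivity) h1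
    have e1 : 0 ≤ (α k - c₀) * tinner (V k) (B k (V k)) :=
      mul_nonneg (by linarith) hq0
    have e2 : 0 ≤ c₀ * (tinner (V k) (B k (V k)) - κ₁ * ‖V k‖ ^ 2) :=
      mul_nonneg hc₀.le (by linarith)
    have : d k = σ / 2 * α k * tinner (V k) (B k (V k)) := rfl
    rw [this]
    nlinarith [hσ0.le]
  have hd0 : ∀ k, 0 ≤ d k := fun k => le_trans (by positivity) (hd k)
  -- properties of M
  have hMle : ∀ k j, j ∈ Finset.Icc (k - m) k → Fx j ≤ M k :=
    fun k j hj => Finset.le_sup' _ hj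
  have hMantisucc : ∀ k, M (k + 1) ≤ M k := by
    intro k
    apply Finset.sup'_le
    intro j hj
    rw [Finset.mem_Icc] at hj
    rcases eq_or_lt_of_le hj.2 with hje | hjl
    · rw [hje]
      calc Fx (k + 1) ≤ M k - d k := hdec' k
        _ ≤ M k := by linarith [hd0 k]
    · exact hMle k j (by rw [Finset.mem_Icc]; omega)
  have hManti : Antitone M := antitone_nat_of_succ_le hMantisucc
  have hFlow : ∀ k, Fx 0 - K * (2 * Rr) ≤ Fx k := by
    intro k
    have h1 := hFX k 0
    have h2 : ‖X k - X 0‖ ≤ 2 * Rr := by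
      calc ‖X k - X 0‖ ≤ ‖X k‖ + ‖X 0‖ := norm_sub_le _ _
        _ = 2 * Rr := by rw [hXnorm k, hXnorm 0]; ring
    have h3 : K * ‖X k - X 0‖ ≤ K * (2 * Rr) := mul_le_mul_of_nonneg_left h2 hK0
    have h4 := abs_le.mp (h1.trans h3)
    linarith [h4.1]
  have hMlow : ∀ k, Fx 0 - K * (2 * Rr) ≤ M k :=
    fun k => (hFlow k).trans (hMle k k (by rw [Finset.mem_Icc]; omega))
  have hMbdd : BddBelow (Set.range M) := by
    refine ⟨Fx 0 - K * (2 * Rr), ?_⟩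
    rintro x ⟨k, rfl⟩
    exact hMlow k
  have hMtend : Tendsto M atTop (nhds (⨅ k, M k)) := tendsto_atTop_ciInf hManti hMbdd
  set linf : ℝ := ⨅ k, M k with hlinf
  have hMshift : ∀ c : ℕ, Tendsto (fun k => M (k - c)) atTop (nhds linf) :=
    fun c => hMtend.comp (tendsto_sub_atTop_nat c)
  -- argmax index
  have hargmax : ∀ k, ∃ j, j ∈ Finset.Icc (k - m) k ∧ M k = Fx j := by
    intro k
    obtain ⟨j, hj1, hj2⟩ := Finset.exists_mem_eq_sup'
      (Finset.nonempty_Icc.mpr (Nat.sub_le k m)) (fun j => Fx j)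
    exact ⟨j, hj1, hj2⟩
  choose lk hlk1 hlk2 using hargmax
  have hlk_le : ∀ k, lk k ≤ k := fun k => (Finset.mem_Icc.mp (hlk1 k)).2
  have hlk_ge : ∀ k, k - m ≤ lk k := fun k => (Finset.mem_Icc.mp (hlk1 k)).1
  -- d → 0 implies ‖V‖ → 0 along any index sequence
  have hVofd : ∀ u : ℕ → ℕ, Tendsto (fun k => d (u k)) atTop (nhds 0) →
      Tendsto (fun k => ‖V (u k)‖) atTop (nhds 0) := by
    intro u hu
    have hc₁ : (0 : ℝ) < σ / 2 * c₀ * κ₁ := by positivity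
    have hsq : Tendsto (fun k => ‖V (u k)‖ ^ 2) atTop (nhds 0) := by
      have hup : Tendsto (fun k => d (u k) / (σ / 2 * c₀ * κ₁)) atTop (nhds 0) := by
        simpa using hu.div_const (σ / 2 * c₀ * κ₁)
      refine tendsto_of_tendsto_of_tendsto_of_le_of_le tendsto_const_nhds hup
        (fun k => sq_nonneg _) (fun k => ?_)
      rw [le_div_iff₀ hc₁]
      linarith [hd (u k), mul_comm (‖V (u k)‖ ^ 2) (σ / 2 * c₀ * κ₁)]
    have h2 := (Real.continuous_sqrt.tendsto 0).comp hsq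
    simp only [Function.comp_def, Real.sqrt_zero] at h2
    exact h2.congr (fun k => Real.sqrt_sq (norm_nonneg _))
  -- main induction
  have claim : ∀ j : ℕ, Tendsto (fun k => Fx (lk k - j)) atTop (nhds linf) := by
    intro j
    induction j with
    | zero =>
      simp only [Nat.sub_zero]
      exact hMtend.congr (fun k => hlk2 k)
    | succ j ih =>
      have hev : ∀ᶠ k in atTop,
          0 ≤ d (lk k - (j + 1)) ∧
            d (lk k - (j + 1)) ≤ M (k - (m + j + 1)) - Fx (lk k - j) := by
        filter_upwards [eventually_ge_atTop (m + j + 1)] with k hk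
        have h1 : j + 1 ≤ lk k := by have := hlk_ge k; omega
        refine ⟨hd0 _, ?_⟩
        have h2 : lk k - (j + 1) + 1 = lk k - j := by omega
        have h3 := hdec' (lk k - (j + 1))
        rw [h2] at h3
        have h4 : M (lk k - (j + 1)) ≤ M (k - (m + j + 1)) := by
          apply hManti
          have := hlk_ge k; omega
        linarith
      have hdtend : Tendsto (fun k => d (lk k - (j + 1))) atTop (nhds 0) := by
        have hup : Tendsto (fun k => M (k - (m + j + 1)) - Fx (lk k - j)) atTop (nhds 0) := by
          have := (hMshift (m + j + 1)).sub ih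
          simpa using this
        exact tendsto_of_tendsto_of_tendsto_of_le_of_le' tendsto_const_nhds hup
          (hev.mono fun k hk => hk.1) (hev.mono fun k hk => hk.2)
      have hVtend : Tendsto (fun k => ‖V (lk k - (j + 1))‖) atTop (nhds 0) :=
        hVofd (fun k => lk k - (j + 1)) hdtend
      have hdiff : Tendsto (fun k => Fx (lk k - (j + 1)) - Fx (lk k - j)) atTop (nhds 0) := by
        apply squeeze_zero_norm' (a := fun k => K * (M₁ * ‖V (lk k - (j + 1))‖))
        · filter_upwards [eventually_ge_atTop (m + j + 1)] with k hk
          have h1 : j + 1 ≤ lk k := by have := hlk_ge k; omega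
          have h2 : lk k - (j + 1) + 1 = lk k - j := by omega
          have h3 := hFstep (lk k - (j + 1))
          rw [h2] at h3
          rw [Real.norm_eq_abs, abs_sub_comm]
          exact h3
        · have := hVtend.const_mul (K * M₁)
          simpa [mul_assoc] using this
      have := hdiff.add ih
      simpa using this
  -- F(X_{k+1}) → linf
  have hFx1 : Tendsto (fun k => Fx (k + 1)) atTop (nhds linf) := by
    rw [Metric.tendsto_atTop]
    intro ε hε
    have h1 : ∀ᶠ k in atTop, ∀ j ∈ Finset.range (m + 1), dist (Fx (lk k - j)) linf < ε := by
      rw [eventually_all_finset]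
      intro j _
      obtain ⟨N, hN⟩ := Metric.tendsto_atTop.mp (claim j) ε hε
      exact eventually_atTop.mpr ⟨N, hN⟩
    obtain ⟨N, hN⟩ := eventually_atTop.mp h1
    refine ⟨N, fun k hk => ?_⟩
    have hk' : N ≤ k + m + 1 := by omega
    have h2 := hN (k + m + 1) hk'
    have hge : k + 1 ≤ lk (k + m + 1) := by have := hlk_ge (k + m + 1); omega
    have hle := hlk_le (k + m + 1)
    have hj1 : lk (k + m + 1) - (k + 1) ∈ Finset.range (m + 1) := by
      rw [Finset.mem_range]; omega
    have h3 := h2 _ hj1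
    have h4 : lk (k + m + 1) - (lk (k + m + 1) - (k + 1)) = k + 1 := by omega
    rwa [h4] at h3
  have hFxtend : Tendsto Fx atTop (nhds linf) := (tendsto_add_atTop_iff_nat 1).mp hFx1
  have hdtend : Tendsto d atTop (nhds 0) := by
    have hup : Tendsto (fun k => M k - Fx (k + 1)) atTop (nhds 0) := by
      simpa using hMtend.sub hFx1
    exact tendsto_of_tendsto_of_tendsto_of_le_of_le tendsto_const_nhds hup hd0
      (fun k => by have := hdec' k; linarith)
  have hVnorm : Tendsto (fun k => ‖V k‖) atTop (nhds 0) := hVofd id hdtend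
  refine ⟨?_, ⟨linf, hFxtend⟩⟩
  refine tendsto_zero_iff_norm_tendsto_zero.mpr ?_
  exact hVnorm
end
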